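/- Let H be symmetric positive definite. For indices i ≠ j, let ρ_{{i,j}} be the group-OBS saliency of pruning {i,j} jointly and ρ_i, ρ_j the single-weight saliencies. Then ρ_{{i,j}} ≥ max(ρ_i, ρ_j), and if (H⁻¹)_{ij} = 0 then ρ_{{i,j}} = ρ_i + ρ_j. -/

import Mathlib

open Matrix

lemma posdef_quad {d : ℕ} {P : Matrix (Fin d) (Fin d) ℝ} (hP : P.PosDef)
    {i j : Fin d} (hij : i ≠ j) (s t : ℝ) (hst : ¬(s = 0 ∧ t = 0)) :
    0 < P i i * s ^ 2 + 2 * P i j * s * t + P j j * t ^ 2 := by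
  have hsym : P j i = P i j := by
    have h := congrFun (congrFun hP.isHermitian i) j
    simpa [Matrix.conjTranspose_apply] using h
  have hx : (Pi.single i s + Pi.single j t : Fin d → ℝ) ≠ 0 := by
    intro h
    rcases not_and_or.mp hst with hs | ht
    · apply hs
      have := congrFun h i
      simpa [Pi.single_apply, hij, hij.symm] using this
    · apply ht
      have := congrFun h j
      simpa [Pi.single_apply, hij, hij.symm] using this
  have := hP.dotProduct_mulVec_pos hx
  simp only [star_trivial, mulVec_add, mulVec_single, dotProduct_add, add_dotProduct,
    single_dotProduct, Pi.add_apply, op_smul_eq_smul, Pi.smul_apply, Matrix.col_apply,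
    smul_eq_mul] at this
  rw [hsym] at this
  nlinarith [this]

/-- Joint saliency of pruning two weights: `ρ_{i,j} ≥ max(ρᵢ, ρⱼ)`, and if
`(H⁻¹)ᵢⱼ = 0` (uncorrelated weights) then `ρ_{i,j} = ρᵢ + ρⱼ`. Here
`ρ_{i,j} = (1/2) w*_{ij}ᵀ ((H⁻¹)_{[{i,j},{i,j}]})⁻¹ w*_{ij}` and
`ρᵢ = w*ᵢ²/(2(H⁻¹)ᵢᵢ)`. -/
theorem joint_saliency_two_weights {d : ℕ} (H : Matrix (Fin d) (Fin d) ℝ)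
    (hH : H.PosDef) (w : Fin d → ℝ) (i j : Fin d) (hij : i ≠ j) :
    let Minv : Matrix (Fin 2) (Fin 2) ℝ :=
      !![H⁻¹ i i, H⁻¹ i j; H⁻¹ j i, H⁻¹ j j]
    let ρij : ℝ := (1 / 2 : ℝ) * (![w i, w j] ⬝ᵥ (Minv⁻¹).mulVec ![w i, w j])
    let ρi : ℝ := (w i) ^ 2 / (2 * H⁻¹ i i)
    let ρj : ℝ := (w j) ^ 2 / (2 * H⁻¹ j j)
    max ρi ρj ≤ ρij ∧ (H⁻¹ i j = 0 → ρij = ρi + ρj) := by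
  intro Minv ρij ρi ρj
  have hP : (H⁻¹).PosDef := hH.inv
  set a := H⁻¹ i i with ha_def
  set b := H⁻¹ i j with hb_def
  set c := H⁻¹ j j with hc_def
  have hsym : H⁻¹ j i = b := by
    have h := congrFun (congrFun hP.isHermitian i) j
    simpa [Matrix.conjTranspose_apply] using h
  have ha : 0 < a := by
    have := posdef_quad hP hij 1 0 (by simp)
    simpa using this
  have hc : 0 < c := by
    have := posdef_quad hP hij 0 1 (by simp)
    simpa using this
  have hdet : 0 < a * c - b ^ 2 := by
    have := posdef_quad hP hij b (-a)
      (by intro h; exact absurd (neg_eq_zero.mp h.2) ha.ne')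
    nlinarith [this, ha]
  have hMinv : Minv⁻¹ = (a * c - b ^ 2)⁻¹ • !![c, -b; -b, a] := by
    have h1 : Minv = !![a, b; b, c] := by simp [Minv, hsym]; exact ⟨⟨rfl, rfl⟩, rfl⟩
    rw [h1, Matrix.inv_def, Matrix.adjugate_fin_two_of, Matrix.det_fin_two_of,
      Ring.inverse_eq_inv']
    congr 1
    ring
  have hρij : ρij = (w i * (c * w i + -b * w j) + w j * (-b * w i + a * w j)) /
      (2 * (a * c - b ^ 2)) := by
    show (1 / 2 : ℝ) * (![w i, w j] ⬝ᵥ (Minv⁻¹).mulVec ![w i, w j]) = _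
    rw [hMinv]
    simp [Matrix.smul_mulVec, Matrix.mulVec, dotProduct, Fin.sum_univ_two]
    field_simp
  refine ⟨max_le ?_ ?_, fun hb0 => ?_⟩
  · show w i ^ 2 / (2 * a) ≤ ρij
    rw [hρij, div_le_div_iff₀ (by positivity) (by positivity)]
    nlinarith [sq_nonneg (b * w i - a * w j)]
  · show w j ^ 2 / (2 * c) ≤ ρij
    rw [hρij, div_le_div_iff₀ (by positivity) (by positivity)]
    nlinarith [sq_nonneg (c * w i - b * w j)]
  · show ρij = w i ^ 2 / (2 * a) + w j ^ 2 / (2 * c)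
    rw [hρij, hb0]
    field_simp
    ring
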